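/- Let F(x,y) = (x−1)(x+1)f₃(x,y)f₄(x,y) with f₃, f₄ affine, and let ε ∈ ℂ. On U = {(x,y) ∈ ℂ² : x ≠ ±1} define φ̃ = F²/(x−1) + F³/(x+1), ψ₁ = 2F/(x−1) + 3F²/(x+1), ψ₂ = 2/(x−1) + 6F/(x+1), ψ₃ = 6/(x+1) (all evaluated at (x, F(x,y))), and the 1-forms η₀ = dF + εφ̃ dx, η_j = εψ_j dx for j = 1,2,3, η_j = 0 for j ≥ 4. Then all Godbillon–Vey equations hold: dη₀ = η₀∧η₁, dη₁ = η₀∧η₂, dη₂ = η₀∧η₃ + η₁∧η₂, dη₃ = η₀∧η₄ + 3η₁∧η₃ + 3η₂∧η₂ + 3η₃∧η₁, where every wedge η_k∧η_l with k, l ≥ 1 vanishes; explicitly ∂_yφ̃ = ψ₁∂_yF, ∂_yψ₁ = ψ₂∂_yF, ∂_yψ₂ = ψ₃∂_yF, ∂_yψ₃ = 0 on U. Hence the deformation dF + ε(F²·df₁/f₁ + F³·df₂/f₂) = 0 admits a Godbillon–Vey sequence of length 4. -/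

import Mathlib

/-- Let `F(x,y) = (x−1)(x+1)f₃(x,y)f₄(x,y)` with `f₃, f₄` affine, and `ε ∈ ℂ`.  On
`U = {(x,y) : x ≠ ±1}` set `φ̃ = F²/(x−1) + F³/(x+1)`, `ψ₁ = 2F/(x−1) + 3F²/(x+1)`,
`ψ₂ = 2/(x−1) + 6F/(x+1)`, `ψ₃ = 6/(x+1)`, and `η₀ = dF + εφ̃ dx`, `η_j = εψ_j dx`
(`j = 1,2,3`), `η_j = 0` (`j ≥ 4`).  Then all Godbillon–Vey equations hold:
`dη₀ = η₀∧η₁`, `dη₁ = η₀∧η₂`, `dη₂ = η₀∧η₃ + η₁∧η₂`, `dη₃ = η₀∧η₄ + 3η₁∧η₃ + 3η₂∧η₂ +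
3η₃∧η₁`, where every wedge `η_k∧η_l` with `k, l ≥ 1` vanishes (all are multiples of
`dx`); explicitly `∂_yφ̃ = ψ₁·∂_yF`, `∂_yψ₁ = ψ₂·∂_yF`, `∂_yψ₂ = ψ₃·∂_yF`, `∂_yψ₃ = 0`
on `U`.  Hence the deformation `dF + ε(F²·df₁/f₁ + F³·df₂/f₂) = 0` admits a
Godbillon–Vey sequence of length 4. -/
theorem stmt_11 (a₃ b₃ c₃ a₄ b₄ c₄ : ℂ)
    (h₃ : (a₃, b₃) ≠ (0, 0)) (h₄ : (a₄, b₄) ≠ (0, 0)) (ε : ℂ)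
    (F : ℂ → ℂ → ℂ)
    (hF : ∀ x y, F x y = (x - 1) * (x + 1) * (a₃ * x + b₃ * y + c₃) * (a₄ * x + b₄ * y + c₄)) :
    ∀ x y : ℂ, x ≠ 1 → x ≠ -1 →
      (deriv (fun t => (F x t) ^ 2 / (x - 1) + (F x t) ^ 3 / (x + 1)) y
        = (2 * F x y / (x - 1) + 3 * (F x y) ^ 2 / (x + 1)) * deriv (fun t => F x t) y)
      ∧ (deriv (fun t => 2 * F x t / (x - 1) + 3 * (F x t) ^ 2 / (x + 1)) y
        = (2 / (x - 1) + 6 * F x y / (x + 1)) * deriv (fun t => F x t) y)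
      ∧ (deriv (fun t => 2 / (x - 1) + 6 * F x t / (x + 1)) y
        = (6 / (x + 1)) * deriv (fun t => F x t) y)
      ∧ deriv (fun _ : ℂ => 6 / (x + 1)) y = 0 := by
  intro x y hx1 hx2
  have hm1 : x - 1 ≠ 0 := sub_ne_zero.mpr hx1
  have hp1 : x + 1 ≠ 0 := fun h => hx2 (by linear_combination h)
  set d : ℂ := (x - 1) * (x + 1) * (b₃ * (a₄ * x + b₄ * y + c₄) + (a₃ * x + b₃ * y + c₃) * b₄) with hd
  have hFx : (fun t => F x t) = fun t => (x - 1) * (x + 1) * (a₃ * x + b₃ * t + c₃) * (a₄ * x + b₄ * t + c₄) := by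
    funext t; exact hF x t
  have hu : HasDerivAt (fun t => F x t) d y := by
    rw [hFx]
    have h3 : HasDerivAt (fun t => a₃ * x + b₃ * t + c₃) b₃ y := by
      simpa using (((hasDerivAt_id y).const_mul b₃).const_add (a₃ * x)).add_const c₃
    have h4 : HasDerivAt (fun t => a₄ * x + b₄ * t + c₄) b₄ y := by
      simpa using (((hasDerivAt_id y).const_mul b₄).const_add (a₄ * x)).add_const c₄
    have := ((h3.const_mul ((x - 1) * (x + 1))).mul h4)
    refine this.congr_deriv ?_
    rw [hd]; ring
  have hdF : deriv (fun t => F x t) y = d := hu.deriv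
  set G : ℂ := F x y with hG
  refine ⟨?_, ?_, ?_, ?_⟩
  · have h : HasDerivAt (fun t => (F x t) ^ 2 / (x - 1) + (F x t) ^ 3 / (x + 1))
        ((2 * G ^ 1 * d) / (x - 1) + (3 * G ^ 2 * d) / (x + 1)) y := by
      exact ((hu.pow 2).div_const (x - 1)).add ((hu.pow 3).div_const (x + 1))
    rw [h.deriv, hdF]
    field_simp
  · have h : HasDerivAt (fun t => 2 * F x t / (x - 1) + 3 * (F x t) ^ 2 / (x + 1))
        ((2 * d) / (x - 1) + (3 * (2 * G ^ 1 * d)) / (x + 1)) y := by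
      exact ((hu.const_mul 2).div_const (x - 1)).add (((hu.pow 2).const_mul 3).div_const (x + 1))
    rw [h.deriv, hdF]
    field_simp
    ring
  · have h : HasDerivAt (fun t => 2 / (x - 1) + 6 * F x t / (x + 1))
        (0 + (6 * d) / (x + 1)) y := by
      exact (hasDerivAt_const y (2 / (x - 1))).add ((hu.const_mul 6).div_const (x + 1))
    rw [h.deriv, hdF]
    field_simp
    ring
  · exact deriv_const y _
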